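/- In (ZMod 10)[X], the polynomial 2X + 1 (corresponding to the carryless number 21) is irreducible. -/

import Mathlib

open Polynomial

instance : Fact (Nat.Prime 2) := ⟨by norm_num⟩
instance : Fact (Nat.Prime 5) := ⟨by norm_num⟩

def f2 : ZMod 10 →+* ZMod 2 := ZMod.castHom (show 2 ∣ 10 by norm_num) (ZMod 2)
def f5 : ZMod 10 →+* ZMod 5 := ZMod.castHom (show 5 ∣ 10 by norm_num) (ZMod 5)

lemma f2_eq (a : ZMod 10) : f2 a = (a.val : ZMod 2) := by
  simp [f2, ZMod.natCast_val]

lemma f5_eq (a : ZMod 10) : f5 a = (a.val : ZMod 5) := by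
  simp [f5, ZMod.natCast_val]

lemma key_unit (a : ZMod 10) (h2 : IsUnit (f2 a)) (h5 : IsUnit (f5 a)) : IsUnit a := by
  rw [f2_eq] at h2; rw [f5_eq] at h5
  revert h2 h5; revert a; decide

lemma key_zero (a : ZMod 10) (h2 : f2 a = 0) (h5 : f5 a = 0) : a = 0 := by
  rw [f2_eq] at h2; rw [f5_eq] at h5
  revert h2 h5; revert a; decide

lemma unit_of_maps (p : Polynomial (ZMod 10)) (h2 : IsUnit (p.map f2)) (h5 : IsUnit (p.map f5)) :
    IsUnit p := by
  obtain ⟨u2, n2⟩ := Polynomial.coeff_isUnit_isNilpotent_of_isUnit h2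
  obtain ⟨u5, n5⟩ := Polynomial.coeff_isUnit_isNilpotent_of_isUnit h5
  apply Polynomial.isUnit_of_coeff_isUnit_isNilpotent
  · exact key_unit _ (by simpa using u2) (by simpa using u5)
  · intro i hi
    have h2' : f2 (p.coeff i) = 0 := by
      have := (n2 i hi).eq_zero; simpa using this
    have h5' : f5 (p.coeff i) = 0 := by
      have := (n5 i hi).eq_zero; simpa using this
    rw [key_zero _ h2' h5']
    exact IsNilpotent.zero

lemma map5_eq : ((2 : Polynomial (ZMod 10)) * X + 1).map f5 = 2 * X + 1 := by
  have : (2 : Polynomial (ZMod 10)) = C 2 := (map_ofNat (C : ZMod 10 →+* Polynomial (ZMod 10)) 2).symm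
  rw [this, Polynomial.map_add, Polynomial.map_mul, Polynomial.map_C, Polynomial.map_X,
    Polynomial.map_one]
  rw [show f5 2 = 2 from map_ofNat f5 2, map_ofNat (C : ZMod 5 →+* Polynomial (ZMod 5)) 2]

lemma map2_eq : ((2 : Polynomial (ZMod 10)) * X + 1).map f2 = 1 := by
  have : (2 : Polynomial (ZMod 10)) = C 2 := (map_ofNat (C : ZMod 10 →+* Polynomial (ZMod 10)) 2).symm
  rw [this, Polynomial.map_add, Polynomial.map_mul, Polynomial.map_C, Polynomial.map_X,
    Polynomial.map_one]
  have : f2 2 = 0 := by rw [show f2 2 = 2 from map_ofNat f2 2]; decide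
  rw [this]; simp

theorem irreducible_21 :
    Irreducible ((2 : Polynomial (ZMod 10)) * X + 1) := by
  have hirr5 : Irreducible ((2 : Polynomial (ZMod 5)) * X + 1) := by
    apply Polynomial.irreducible_of_degree_eq_one
    have : (2 : Polynomial (ZMod 5)) * X + 1 = C 2 * X + C 1 := by
      rw [map_ofNat (C : ZMod 5 →+* Polynomial (ZMod 5)) 2, map_one]
    rw [this, Polynomial.degree_linear (by decide)]
  constructor
  · intro h
    have h5 : IsUnit (((2 : Polynomial (ZMod 10)) * X + 1).map f5) := h.map (mapRingHom f5)
    rw [map5_eq] at h5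
    exact hirr5.not_isUnit h5
  · intro a b hab
    have h5 : (a.map f5) * (b.map f5) = 2 * X + 1 := by
      rw [← Polynomial.map_mul, ← hab, map5_eq]
    have h2 : (a.map f2) * (b.map f2) = 1 := by
      rw [← Polynomial.map_mul, ← hab, map2_eq]
    have hu2a : IsUnit (a.map f2) := IsUnit.of_mul_eq_one _ h2
    have hu2b : IsUnit (b.map f2) := IsUnit.of_mul_eq_one _ (by rwa [mul_comm] at h2)
    rcases hirr5.isUnit_or_isUnit h5.symm with h | h
    · exact Or.inl (unit_of_maps a hu2a h)
    · exact Or.inr (unit_of_maps b hu2b h)
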